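/- Let R be an arbitrary commutative ring and {R_λ}_{λ∈Λ} a family of intermediate rings between R and the integral closure R̄ of R in its total quotient ring Q(R). If each R_λ is a weakly Arf ring, then the intersection ⋂_λ R_λ is a weakly Arf ring. -/

import Mathlib

set_option maxHeartbeats 2000000
set_option synthInstance.maxHeartbeats 1000000

section Aux

variable {R : Type*} [CommRing R]

local notation "L" => Localization (nonZeroDivisors R)

lemma aux_isUnit (S : Subalgebra R (Localization (nonZeroDivisors R)))
    (x : ↥S) (hx : x ∈ nonZeroDivisors ↥S) : IsUnit (x : L) := by
  have hinj : Function.Injective (algebraMap R L) :=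
    IsLocalization.injective _ (le_refl (nonZeroDivisors R))
  have hnzd : (x : L) ∈ nonZeroDivisors L := by
    rw [mem_nonZeroDivisors_iff_right]
    intro q hq
    obtain ⟨⟨r, u⟩, rfl⟩ := IsLocalization.mk'_surjective (nonZeroDivisors R) q
    have h1 : (x : L) * algebraMap R L r = 0 := by
      rw [← IsLocalization.mk'_spec L r u, ← mul_assoc, mul_comm (x : L), hq, zero_mul]
    have hr0 : r = 0 := by
      have hmem : algebraMap R L r ∈ S := S.algebraMap_mem r
      have h2 : (⟨algebraMap R L r, hmem⟩ : ↥S) * x = 0 :=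
        Subtype.ext (by simpa [mul_comm] using h1)
      have := mem_nonZeroDivisors_iff_right.mp hx _ h2
      exact hinj (by simpa using congrArg Subtype.val this)
    simp [hr0]
  obtain ⟨⟨r, u⟩, hru⟩ := IsLocalization.mk'_surjective (nonZeroDivisors R) ((x : L))
  dsimp only at hru
  have hxu : (x : L) * algebraMap R L (u : R) = algebraMap R L r := by
    rw [← hru, IsLocalization.mk'_spec]
  have hr : r ∈ nonZeroDivisors R := by
    rw [mem_nonZeroDivisors_iff_right]
    intro t ht
    have h0 : algebraMap R L ((u : R) * t) * (x : L) = 0 := by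
      rw [map_mul, mul_comm, ← mul_assoc, hxu, ← map_mul, mul_comm r t, ht, map_zero]
    have h1 : algebraMap R L ((u : R) * t) = 0 := mem_nonZeroDivisors_iff_right.mp hnzd _ h0
    have h2 : (u : R) * t = 0 := hinj (by simpa using h1)
    exact mem_nonZeroDivisors_iff_right.mp u.2 t (by rwa [mul_comm] at h2)
  have h1 : IsUnit (algebraMap R L r) := IsLocalization.map_units L ⟨r, hr⟩
  have h2 : IsUnit (IsLocalization.mk' L (1 : R) u) :=
    IsUnit.of_mul_eq_one (algebraMap R L (u : R))
      (by rw [IsLocalization.mk'_spec, map_one])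
  rw [← hru, IsLocalization.mk'_eq_mul_mk'_one]
  exact h1.mul h2

lemma aux_mem_nzd (S : Subalgebra R (Localization (nonZeroDivisors R)))
    (x : ↥S) (hx : IsUnit (x : L)) : x ∈ nonZeroDivisors ↥S := by
  rw [mem_nonZeroDivisors_iff_right]
  intro a ha
  have : (a : L) * (x : L) = 0 := by
    have := congrArg Subtype.val ha; push_cast at this; exact_mod_cast this
  have : (a : L) = 0 := by
    have h := congrArg (· * ((hx.unit⁻¹ : Lˣ) : L)) this
    simpa [mul_assoc] using h
  exact Subtype.ext this

lemma aux_isLocalization (S : Subalgebra R (Localization (nonZeroDivisors R))) :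
    IsLocalization (nonZeroDivisors ↥S) (Localization (nonZeroDivisors R)) := by
  rw [isLocalization_iff]
  refine ⟨?_, ?_, ?_⟩
  · rintro ⟨x, hx⟩
    exact aux_isUnit S x hx
  · intro q
    obtain ⟨⟨r, u⟩, rfl⟩ := IsLocalization.mk'_surjective (nonZeroDivisors R) q
    have hu : IsUnit ((⟨algebraMap R L (u : R), S.algebraMap_mem _⟩ : ↥S) : L) :=
      IsLocalization.map_units L u
    refine ⟨⟨⟨algebraMap R L r, S.algebraMap_mem r⟩,
      ⟨⟨algebraMap R L (u : R), S.algebraMap_mem _⟩, aux_mem_nzd S _ hu⟩⟩, ?_⟩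
    show IsLocalization.mk' L r u * algebraMap R L (u : R) = algebraMap R L r
    rw [IsLocalization.mk'_spec]
  · intro a b h
    exact ⟨1, by simpa using Subtype.ext (show (a : L) = b from h)⟩

end Aux



/-- A commutative ring `B` is weakly Arf if whenever `x` is a non-zerodivisor and
`y/x, z/x` (in the total quotient ring `Q(B)`) are integral over `B`, then `yz/x ∈ B`. -/
def IsWeaklyArf (B : Type*) [CommRing B] : Prop :=
  ∀ (x : nonZeroDivisors B) (y z : B),
    IsIntegral B (IsLocalization.mk' (Localization (nonZeroDivisors B)) y x) →
    IsIntegral B (IsLocalization.mk' (Localization (nonZeroDivisors B)) z x) →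
    ∃ b : B, algebraMap B (Localization (nonZeroDivisors B)) b =
      IsLocalization.mk' (Localization (nonZeroDivisors B)) (y * z) x

/-- If `{R_λ}` is a family of intermediate rings between `R` and the integral closure `R̄`
of `R` in `Q(R)`, and each `R_λ` is weakly Arf, then so is `⋂_λ R_λ`. -/
theorem isWeaklyArf_iInf (R : Type*) [CommRing R] {Λ : Type*}
    (T : Λ → Subalgebra R (Localization (nonZeroDivisors R)))
    (hle : ∀ l : Λ, T l ≤ integralClosure R (Localization (nonZeroDivisors R)))
    (harf : ∀ l : Λ, IsWeaklyArf ↥(T l)) :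
    IsWeaklyArf ↥(⨅ l : Λ, T l) := by
  set L := Localization (nonZeroDivisors R) with hL
  set S := ⨅ l : Λ, T l with hS
  intro x y z hy hz
  haveI hlocS : IsLocalization (nonZeroDivisors ↥S) L := aux_isLocalization S
  -- the element y/x and z/x inside L
  have hxU : IsUnit ((x : ↥S) : L) := aux_isUnit S x x.2
  set q : L := IsLocalization.mk' L y x with hq
  set q' : L := IsLocalization.mk' L z x with hq'
  have hyq : IsIntegral ↥S q := by
    have := hy.map (IsLocalization.algEquiv (nonZeroDivisors ↥S)
      (Localization (nonZeroDivisors ↥S)) L)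
    simpa [IsLocalization.algEquiv_mk'] using this
  have hzq : IsIntegral ↥S q' := by
    have := hz.map (IsLocalization.algEquiv (nonZeroDivisors ↥S)
      (Localization (nonZeroDivisors ↥S)) L)
    simpa [IsLocalization.algEquiv_mk'] using this
  have hqx : q * ((x : ↥S) : L) = ((y : ↥S) : L) := IsLocalization.mk'_spec L y x
  have hq'x : q' * ((x : ↥S) : L) = ((z : ↥S) : L) := IsLocalization.mk'_spec L z x
  -- the candidate element
  set u : L := ((hxU.unit⁻¹ : Lˣ) : L) * (((y : ↥S) : L) * ((z : ↥S) : L)) with hu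
  have hux : u * ((x : ↥S) : L) = ((y : ↥S) : L) * ((z : ↥S) : L) := by
    rw [hu, mul_comm ((hxU.unit⁻¹ : Lˣ) : L), mul_assoc]
    simp
  -- u belongs to each T l
  have humem : ∀ l : Λ, u ∈ T l := by
    intro l
    set B := T l with hB
    have hSB : S ≤ B := iInf_le T l
    letI : Algebra ↥S ↥B := (Subalgebra.inclusion hSB).toAlgebra
    haveI : IsScalarTower ↥S ↥B L :=
      IsScalarTower.of_algebraMap_eq (fun s => rfl)
    haveI hlocB : IsLocalization (nonZeroDivisors ↥B) L := aux_isLocalization B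
    set x' : ↥B := Subalgebra.inclusion hSB (x : ↥S) with hx'
    set y' : ↥B := Subalgebra.inclusion hSB y with hy'
    set z' : ↥B := Subalgebra.inclusion hSB z with hz'
    have hxL : (x' : L) = ((x : ↥S) : L) := rfl
    have hx'nzd : x' ∈ nonZeroDivisors ↥B := aux_mem_nzd B x' (by rw [hxL]; exact hxU)
    -- q = mk'_B y' x'
    have hqB : q = IsLocalization.mk' L (y' : ↥B) (⟨x', hx'nzd⟩ : nonZeroDivisors ↥B) := by
      rw [IsLocalization.eq_mk'_iff_mul_eq]
      exact hqx
    have hq'B : q' = IsLocalization.mk' L (z' : ↥B) (⟨x', hx'nzd⟩ : nonZeroDivisors ↥B) := by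
      rw [IsLocalization.eq_mk'_iff_mul_eq]
      exact hq'x
    -- integrality over B
    have hyB : IsIntegral ↥B q := hyq.tower_top
    have hzB : IsIntegral ↥B q' := hzq.tower_top
    set e := IsLocalization.algEquiv (nonZeroDivisors ↥B) (Localization (nonZeroDivisors ↥B)) L
      with he
    have hyB' : IsIntegral ↥B
        (IsLocalization.mk' (Localization (nonZeroDivisors ↥B)) y' ⟨x', hx'nzd⟩) := by
      have := hyB.map e.symm
      have hmk : e.symm q
          = IsLocalization.mk' (Localization (nonZeroDivisors ↥B)) y' ⟨x', hx'nzd⟩ := by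
        rw [hqB]
        exact IsLocalization.algEquiv_mk' _ _
      rwa [hmk] at this
    have hzB' : IsIntegral ↥B
        (IsLocalization.mk' (Localization (nonZeroDivisors ↥B)) z' ⟨x', hx'nzd⟩) := by
      have := hzB.map e.symm
      have hmk : e.symm q'
          = IsLocalization.mk' (Localization (nonZeroDivisors ↥B)) z' ⟨x', hx'nzd⟩ := by
        rw [hq'B]
        exact IsLocalization.algEquiv_mk' _ _
      rwa [hmk] at this
    obtain ⟨b, hb⟩ := harf l ⟨x', hx'nzd⟩ y' z' hyB' hzB'
    -- push hb into L via e
    have hbL : (b : L) = IsLocalization.mk' L ((y' * z' : ↥B)) (⟨x', hx'nzd⟩ : nonZeroDivisors ↥B) := by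
      have := congrArg e hb
      rwa [IsLocalization.algEquiv_mk', show e (algebraMap ↥B (Localization (nonZeroDivisors ↥B)) b)
        = algebraMap ↥B L b from AlgEquiv.commutes e b] at this
    have hbx : (b : L) * ((x : ↥S) : L) = ((y : ↥S) : L) * ((z : ↥S) : L) := by
      have h2 : IsLocalization.mk' L ((y' * z' : ↥B)) (⟨x', hx'nzd⟩ : nonZeroDivisors ↥B)
          * (x' : L) = ((y' * z' : ↥B) : L) :=
        IsLocalization.mk'_spec L ((y' * z' : ↥B)) (⟨x', hx'nzd⟩ : nonZeroDivisors ↥B)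
      rw [hbL, ← hxL, h2]
      rfl
    have : u = (b : L) := by
      have := hux.trans hbx.symm
      exact hxU.mul_right_cancel (by rwa [hu] at this ⊢)
    rw [this]
    exact b.2
  refine ⟨⟨u, by rw [hS, Algebra.mem_iInf]; exact humem⟩, ?_⟩
  -- conclude via the algEquiv for S
  set eS := IsLocalization.algEquiv (nonZeroDivisors ↥S) (Localization (nonZeroDivisors ↥S)) L
  apply eS.injective
  rw [IsLocalization.algEquiv_mk', AlgEquiv.commutes, IsLocalization.eq_mk'_iff_mul_eq]
  show u * ((x : ↥S) : L) = ((y * z : ↥S) : L)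
  exact hux
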